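/- Let θ ∈ (0,1), e ∈ [0,1], γ ∈ (0,1], δ ∈ [0,1] with γ + δ ≤ 1. Then the difference of the mean activities of reciprocators and selfish agents satisfies the exact identity Act_r(γ,δ) − Act_s(γ,δ) = (1−e)·γθ/(1−(1−γ−δ)θ); in particular Act_r ≥ Act_s, with strict inequality whenever e < 1 and γ > 0. -/

import Mathlib

/-- Exact identity for the activity gap between reciprocators and selfish agents:
`Act_r − Act_s = (1−e)·γθ/(1−(1−γ−δ)θ)`; hence `Act_r ≥ Act_s`, strictly when
`e < 1` and `γ > 0`. -/
theorem reciprocators_more_active_than_selfish (θ e γ δ : ℝ)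
    (hθ : θ ∈ Set.Ioo (0:ℝ) 1) (he : e ∈ Set.Icc (0:ℝ) 1)
    (hγ : γ ∈ Set.Ioc (0:ℝ) 1) (hδ : δ ∈ Set.Icc (0:ℝ) 1)
    (hsum : γ + δ ≤ 1) :
    let A := 1 - (1 - θ) / (1 - (1 - γ) * θ)
    let B := 1 - (1 - θ) / (1 - (1 - γ - δ) * θ)
    let ActS := 1 + e * (A * (1 - γ) + B * γ)
      + (1 - A) * (1 - γ) + (1 - B) * γ
    let ActR := 1 + e * A * (1 - γ) + B * ((1 - e) * γ / (γ + δ) + e * γ)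
      + (1 - A) * (1 - γ) + (1 - B) * γ
    ActR - ActS = (1 - e) * γ * θ / (1 - (1 - γ - δ) * θ)
      ∧ ActS ≤ ActR ∧ (e < 1 → 0 < γ → ActS < ActR) := by
  obtain ⟨hθ0, hθ1⟩ := hθ
  obtain ⟨he0, he1⟩ := he
  obtain ⟨hγ0, hγ1⟩ := hγ
  obtain ⟨hδ0, hδ1⟩ := hδ
  intro A B ActS ActR
  have hγδ : 0 < γ + δ := by linarith
  have hden : 0 < 1 - (1 - γ - δ) * θ := by nlinarith
  have key : ActR - ActS = (1 - e) * γ * θ / (1 - (1 - γ - δ) * θ) := by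
    show (1 + e * A * (1 - γ) + B * ((1 - e) * γ / (γ + δ) + e * γ)
      + (1 - A) * (1 - γ) + (1 - B) * γ)
      - (1 + e * (A * (1 - γ) + B * γ) + (1 - A) * (1 - γ) + (1 - B) * γ)
      = (1 - e) * γ * θ / (1 - (1 - γ - δ) * θ)
    show (1 + e * A * (1 - γ)
        + (1 - (1 - θ) / (1 - (1 - γ - δ) * θ)) * ((1 - e) * γ / (γ + δ) + e * γ)
      + (1 - A) * (1 - γ) + (1 - (1 - (1 - θ) / (1 - (1 - γ - δ) * θ))) * γ)
      - (1 + e * (A * (1 - γ) + (1 - (1 - θ) / (1 - (1 - γ - δ) * θ)) * γ)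
        + (1 - A) * (1 - γ) + (1 - (1 - (1 - θ) / (1 - (1 - γ - δ) * θ))) * γ)
      = (1 - e) * γ * θ / (1 - (1 - γ - δ) * θ)
    have hD : 1 - θ * (1 - γ - δ) ≠ 0 := ne_of_gt (by nlinarith)
    field_simp [hden.ne', hγδ.ne', hD]
    ring
  refine ⟨key, ?_, ?_⟩
  · rw [← sub_nonneg, key]
    exact div_nonneg (mul_nonneg (mul_nonneg (by linarith) hγ0.le) hθ0.le) hden.le
  · intro he1' hγ'
    rw [← sub_pos, key]
    exact div_pos (mul_pos (mul_pos (by linarith) hγ') hθ0) hden
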